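/- Let L = G ∔ I be a semisimple Leibniz algebra (G a semisimple Lie subalgebra, I the abelian ideal of squares, with [G,G]=G, [I,G]=I, [G,I]=0, [I,I]=0), graded by L_0 = G, L_1 = I. Then the homogeneous component ZL^2_{(-2)} of degree -2 Leibniz 2-cocycles (valued in L) vanishes, so ZL^2(L,L) = ZL^2_{(-1)} ⊕ ZL^2_{(0)} ⊕ ZL^2_{(1)}. -/

import Mathlib

/-- For a semisimple Leibniz algebra `L = G ∔ I` (graded by `L₀ = G`, `L₁ = I`), every
Leibniz 2-cocycle of degree `-2` (i.e. vanishing except possibly on `I ⊗ I`, where it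
takes values in `G`) is zero; hence `ZL² = ZL²₍₋₁₎ ⊕ ZL²₍₀₎ ⊕ ZL²₍₁₎`. -/
theorem stmt8 {F L : Type*} [Field F] [AddCommGroup L] [Module F L]
    (br : L →ₗ[F] L →ₗ[F] L)
    (leib : ∀ x y z : L, br x (br y z) = br (br x y) z - br (br x z) y)
    (G I : Submodule F L) (hcompl : IsCompl G I)
    -- `[G,G] = G`
    (hGG : Submodule.span F {u : L | ∃ a ∈ G, ∃ b ∈ G, u = br a b} = G)
    -- `[I,G] = I`
    (hIG : Submodule.span F {u : L | ∃ a ∈ I, ∃ b ∈ G, u = br a b} = I)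
    -- `[G,I] = 0`
    (hGI : ∀ a ∈ G, ∀ b ∈ I, br a b = 0)
    -- `[I,I] = 0`
    (hII : ∀ a ∈ I, ∀ b ∈ I, br a b = 0)
    -- the semisimple Lie algebra `G` has trivial centre
    (hcent : ∀ c ∈ G, (∀ g ∈ G, br g c = 0) → c = 0)
    (φ : L →ₗ[F] L →ₗ[F] L)
    (hcoc : ∀ x y z : L,
      br x (φ y z) - br (φ x y) z + br (φ x z) y +
        φ x (br y z) - φ (br x y) z + φ (br x z) y = 0)
    -- `φ` has degree `-2`: it vanishes except possibly on `I ⊗ I`…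
    (hdeg₁ : ∀ a ∈ G, ∀ b : L, φ a b = 0)
    (hdeg₂ : ∀ a ∈ I, ∀ b ∈ G, φ a b = 0)
    -- …where it takes values in `G`
    (hdeg₃ : ∀ a ∈ I, ∀ b ∈ I, φ a b ∈ G) :
    φ = 0 := by
  -- Step 1: φ vanishes on I × I.
  have hIIzero : ∀ y ∈ I, ∀ z ∈ I, φ y z = 0 := by
    intro y hy z hz
    apply hcent _ (hdeg₃ y hy z hz)
    intro g hg
    have h := hcoc g y z
    rw [hdeg₁ g hg y, hdeg₁ g hg z, hdeg₁ g hg (br y z),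
        hGI g hg y hy, hGI g hg z hz] at h
    simpa using h
  -- Step 2: φ = 0 by decomposing arguments.
  ext u v
  obtain ⟨a, b, ha, hb, rfl⟩ := Submodule.codisjoint_iff_exists_add_eq.mp hcompl.codisjoint u
  obtain ⟨c, d, hc, hd, rfl⟩ := Submodule.codisjoint_iff_exists_add_eq.mp hcompl.codisjoint v
  simp [map_add, hdeg₁ a ha, hdeg₂ b hb c hc, hIIzero b hb d hd]
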